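/- Let S ∈ ℝ^{K×K} be irreducible with nonnegative entries and Perron–Frobenius eigenvalue ρ := ρ(S) > 0, let 0 < τ < ρ, and let s ∈ ℝ^K be an entrywise positive vector with Sᵗs = ρ s. Then s ∈ D_τ and J(s) = τ/ρ − log(τ/ρ). Consequently, if v ∈ D_τ satisfies J(v) ≤ τ/ρ − log(τ/ρ), then (Sᵗv)_i ≤ e·ρ·(τ/ρ)^{1−K}·v_i for every i. -/

import Mathlib

open Matrix

/-- The normalized average `⟨x⟩ = (1/K) ∑ i, x i` of a vector. -/
noncomputable def avg {K : ℕ} (x : Fin K → ℝ) : ℝ := (∑ i, x i) / K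

/-- The domain `D_τ = {x : 0 < x, τ x < Sᵗx entrywise}` of the functional `J`. -/
def Dtau {K : ℕ} (S : Matrix (Fin K) (Fin K) ℝ) (τ : ℝ) : Set (Fin K → ℝ) :=
  {x | (∀ i, 0 < x i) ∧ ∀ i, τ * x i < Sᵀ.mulVec x i}

/-- The functional `J(x) = ⟨τ x/(Sᵗx)⟩ − ⟨log(τ x/(Sᵗx))⟩`. -/
noncomputable def Jfun {K : ℕ} (S : Matrix (Fin K) (Fin K) ℝ) (τ : ℝ) (x : Fin K → ℝ) : ℝ :=
  avg (fun i => τ * x i / Sᵀ.mulVec x i) - avg (fun i => Real.log (τ * x i / Sᵀ.mulVec x i))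

/-- Let `S` be irreducible nonnegative with Perron–Frobenius eigenvalue
`ρ > 0`, `0 < τ < ρ`, and `s` a positive vector with `Sᵗs = ρ s`. Then `s ∈ D_τ` and
`J(s) = τ/ρ − log(τ/ρ)`. Consequently, if `v ∈ D_τ` satisfies `J(v) ≤ τ/ρ − log(τ/ρ)`, then
`(Sᵗv)_i ≤ e·ρ·(τ/ρ)^{1−K}·v_i` for every `i`. -/
theorem stmt_6 (K : ℕ) (hK : 1 ≤ K) (S : Matrix (Fin K) (Fin K) ℝ)
    (hS : ∀ i j, 0 ≤ S i j)
    (hirr : ∀ i j, ∃ m : ℕ, 1 ≤ m ∧ 0 < (S ^ m) i j)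
    (ρ : ℝ) (hρ : 0 < ρ) (s : Fin K → ℝ) (hs : ∀ i, 0 < s i)
    (hseig : Sᵀ.mulVec s = ρ • s)
    (τ : ℝ) (hτ0 : 0 < τ) (hτρ : τ < ρ) :
    s ∈ Dtau S τ ∧
    Jfun S τ s = τ / ρ - Real.log (τ / ρ) ∧
    ∀ v ∈ Dtau S τ, Jfun S τ v ≤ τ / ρ - Real.log (τ / ρ) →
      ∀ i, Sᵀ.mulVec v i ≤ Real.exp 1 * ρ * (τ / ρ) ^ ((1 : ℤ) - (K : ℤ)) * v i := by

  have hK0 : (0:ℝ) < K := by exact_mod_cast hK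
  have ht0 : 0 < τ / ρ := div_pos hτ0 hρ
  have ht1 : τ / ρ < 1 := (div_lt_one hρ).mpr hτρ
  have hsd : s ∈ Dtau S τ := by
    refine ⟨hs, fun i => ?_⟩
    rw [hseig]
    simpa [smul_eq_mul] using (mul_lt_mul_of_pos_right hτρ (hs i))
  have hJs : Jfun S τ s = τ / ρ - Real.log (τ / ρ) := by
    have h1 : ∀ i, τ * s i / Sᵀ.mulVec s i = τ / ρ := by
      intro i
      rw [hseig]
      have := (hs i).ne'
      simp only [Pi.smul_apply, smul_eq_mul]
      field_simp
    simp only [Jfun, avg, h1]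
    rw [Finset.sum_const, Finset.sum_const]
    simp only [Finset.card_univ, Fintype.card_fin, nsmul_eq_mul]
    field_simp
  refine ⟨hsd, hJs, ?_⟩
  intro v hv hJv i
  set c : ℝ := τ / ρ - Real.log (τ / ρ) with hc
  obtain ⟨hv0, hv2⟩ := hv
  have hvS : ∀ j, 0 < Sᵀ.mulVec v j := fun j =>
    lt_trans (mul_pos hτ0 (hv0 j)) (hv2 j)
  set w : Fin K → ℝ := fun j => τ * v j / Sᵀ.mulVec v j with hw
  have hw0 : ∀ j, 0 < w j := fun j => div_pos (mul_pos hτ0 (hv0 j)) (hvS j)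
  have hw1 : ∀ j, w j < 1 := fun j => (div_lt_one (hvS j)).mpr (hv2 j)
  have hterm : ∀ j, (1:ℝ) ≤ w j - Real.log (w j) := by
    intro j
    have := Real.log_le_sub_one_of_pos (hw0 j)
    linarith
  have hJv' : Jfun S τ v = (∑ j, (w j - Real.log (w j))) / K := by
    simp only [Jfun, avg, Finset.sum_sub_distrib, sub_div]
    rfl
  have hsum : ∑ j, (w j - Real.log (w j)) ≤ K * c := by
    rw [hJv', div_le_iff₀ hK0] at hJv
    linarith
  have hi2 : w i - Real.log (w i) ≤ K * c - (K - 1) := by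
    have h3 : (w i - Real.log (w i)) + ∑ j ∈ Finset.univ.erase i, (w j - Real.log (w j))
        = ∑ j, (w j - Real.log (w j)) :=
      Finset.add_sum_erase Finset.univ (fun j => w j - Real.log (w j)) (Finset.mem_univ i)
    have h4 : (K - 1 : ℝ) ≤ ∑ j ∈ Finset.univ.erase i, (w j - Real.log (w j)) := by
      have := Finset.card_nsmul_le_sum (Finset.univ.erase i)
        (fun j => w j - Real.log (w j)) 1 (fun j _ => hterm j)
      have hcard : (Finset.univ.erase i).card = K - 1 := by
        rw [Finset.card_erase_of_mem (Finset.mem_univ i)]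
        simp
      rw [hcard, nsmul_eq_mul, mul_one] at this
      have : ((K - 1 : ℕ) : ℝ) ≤ _ := this
      rwa [Nat.cast_sub hK, Nat.cast_one] at this
    linarith
  have hlog : Real.log (w i)⁻¹ ≤ K * c - K + 1 := by
    rw [Real.log_inv]
    have := hw0 i
    linarith
  have hinv : (w i)⁻¹ ≤ Real.exp (K * c - K + 1) := by
    calc (w i)⁻¹ = Real.exp (Real.log (w i)⁻¹) :=
          (Real.exp_log (inv_pos.mpr (hw0 i))).symm
      _ ≤ _ := Real.exp_le_exp.mpr hlog
  have key : Sᵀ.mulVec v i ≤ τ * v i * Real.exp (K * c - K + 1) := by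
    have hwi : (w i)⁻¹ = Sᵀ.mulVec v i / (τ * v i) := by
      rw [hw]; simp [inv_div]
    rw [hwi, div_le_iff₀ (mul_pos hτ0 (hv0 i))] at hinv
    linarith [hinv]
  have hexp : Real.exp (K * c - K + 1) ≤ Real.exp 1 * ((τ / ρ) ^ (K:ℕ))⁻¹ := by
    have hsplit : (K:ℝ) * c - K + 1 = ((K:ℝ) * (τ/ρ) - K + 1) + (-((K:ℝ) * Real.log (τ/ρ))) := by
      rw [hc]; ring
    rw [hsplit, Real.exp_add]
    have e1 : Real.exp ((K:ℝ) * (τ/ρ) - K + 1) ≤ Real.exp 1 := by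
      apply Real.exp_le_exp.mpr
      nlinarith [hK0, ht1.le]
    have e2 : Real.exp (-((K:ℝ) * Real.log (τ/ρ))) = ((τ/ρ) ^ (K:ℕ))⁻¹ := by
      rw [Real.exp_neg, Real.exp_nat_mul, Real.exp_log ht0]
    rw [e2]
    exact mul_le_mul_of_nonneg_right e1 (by positivity)
  have hz : Real.exp 1 * ρ * (τ / ρ) ^ ((1:ℤ) - (K:ℤ)) * v i
      = τ * v i * (Real.exp 1 * ((τ / ρ) ^ (K:ℕ))⁻¹) := by
    rw [zpow_sub₀ (ne_of_gt ht0), zpow_one, zpow_natCast]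
    field_simp
  calc Sᵀ.mulVec v i ≤ τ * v i * Real.exp (K * c - K + 1) := key
    _ ≤ τ * v i * (Real.exp 1 * ((τ / ρ) ^ (K:ℕ))⁻¹) := by
        exact mul_le_mul_of_nonneg_left hexp (mul_pos hτ0 (hv0 i)).le
    _ = _ := hz.symm
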